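/- Let K be a field with nonzero weights a_i(x), b_ij(x), c_ij(x) ∈ K^× for distinct i,j ∈ {0,...,n-1}, x ∈ {S,T}. Suppose Δ_01(S) = Δ_01(T) and Δ_10(S) = Δ_10(T). Then, fixing any nonzero C_01 ∈ K^×, the tuple defined by A_0 = α_01 C_01, A_1 = α_10 τ_01 C_01, B_01 = β_01 C_01, B_10 = β_10 τ_01 C_01, C_10 = τ_01 C_01 satisfies all fourteen two-color Yang–Baxter polynomial equations Y_m(0,1) = 0 and Y_m(1,0) = 0 for 1 ≤ m ≤ 7. -/

import Mathlib

set_option maxHeartbeats 1600000 in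


/-- Under Δ01(S)=Δ01(T) and Δ10(S)=Δ10(T), the parametrized tuple solves all
fourteen two-color Yang–Baxter polynomial equations. -/
theorem stmt4 {K : Type*} [Field K]
    (a0S a1S b01S b10S c01S c10S a0T a1T b01T b10T c01T c10T : K)
    (ha0S : a0S ≠ 0) (ha1S : a1S ≠ 0) (hb01S : b01S ≠ 0) (hb10S : b10S ≠ 0)
    (hc01S : c01S ≠ 0) (hc10S : c10S ≠ 0)
    (ha0T : a0T ≠ 0) (ha1T : a1T ≠ 0) (hb01T : b01T ≠ 0) (hb10T : b10T ≠ 0)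
    (hc01T : c01T ≠ 0) (hc10T : c10T ≠ 0)
    (hΔ01 : (a0S * a1S + b01S * b10S - c01S * c10S) / (a0S * b01S) =
            (a0T * a1T + b01T * b10T - c01T * c10T) / (a0T * b01T))
    (hΔ10 : (a1S * a0S + b10S * b01S - c10S * c01S) / (a1S * b10S) =
            (a1T * a0T + b10T * b01T - c10T * c01T) / (a1T * b10T))
    (τ01 β01 β10 α01 α10 : K)
    (hτ01 : τ01 = c01T * c10S / (c01S * c10T))
    (hβ01 : β01 = (a1T * b01S - a1S * b01T) / (c01S * c10T))
    (hβ10 : β10 = (a0T * b10S - a0S * b10T) / (c10S * c01T))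
    (hα01 : α01 = (β01 * a0S * c10T + b01T * c10S) / (b01S * c10T))
    (hα10 : α10 = (β10 * a1S * c01T + b10T * c01S) / (b10S * c01T))
    (C01 : K) (hC01 : C01 ≠ 0)
    (A0 A1 B01 B10 C10 : K)
    (hA0 : A0 = α01 * C01) (hA1 : A1 = α10 * τ01 * C01)
    (hB01 : B01 = β01 * C01) (hB10 : B10 = β10 * τ01 * C01)
    (hC10 : C10 = τ01 * C01) :
    -- Y_m(0,1) = 0 for m = 1,...,7
    (A0 * b01S * c01T - B01 * a0S * c01T - C10 * b01T * c01S = 0 ∧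
     A0 * a0T * c01S - B10 * b01T * c01S - C01 * a0S * c01T = 0 ∧
     B01 * a0S * c10T + C01 * b01T * c10S - A0 * b01S * c10T = 0 ∧
     C01 * c01T * c10S - C10 * c01S * c10T = 0 ∧
     C01 * a0T * b10S - B10 * c01S * c10T - C01 * a0S * b10T = 0 ∧
     B01 * c01S * c10T + C01 * a1S * b01T - C01 * a1T * b01S = 0 ∧
     B01 * b10T * c01S + C01 * a1S * c01T - A1 * a1T * c01S = 0) ∧
    -- Y_m(1,0) = 0 for m = 1,...,7
    (A1 * b10S * c10T - B10 * a1S * c10T - C01 * b10T * c10S = 0 ∧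
     A1 * a1T * c10S - B01 * b10T * c10S - C10 * a1S * c10T = 0 ∧
     B10 * a1S * c01T + C10 * b10T * c01S - A1 * b10S * c01T = 0 ∧
     C10 * c10T * c01S - C01 * c10S * c01T = 0 ∧
     C10 * a1T * b01S - B01 * c10S * c01T - C10 * a1S * b01T = 0 ∧
     B10 * c10S * c01T + C10 * a0S * b10T - C10 * a0T * b10S = 0 ∧
     B10 * b01T * c10S + C10 * a0S * c10T - A0 * a0T * c10S = 0) := by
  subst hA0 hA1 hB01 hB10 hC10 hα01 hα10 hβ01 hβ10 hτ01
  have hD01 : (a0S * a1S + b01S * b10S - c01S * c10S) * (a0T * b01T) =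
      (a0T * a1T + b01T * b10T - c01T * c10T) * (a0S * b01S) := by
    field_simp at hΔ01; linear_combination hΔ01
  have hD10 : (a1S * a0S + b10S * b01S - c10S * c01S) * (a1T * b10T) =
      (a1T * a0T + b10T * b01T - c10T * c01T) * (a1S * b10S) := by
    field_simp at hΔ10; linear_combination hΔ10
  refine ⟨⟨?_,?_,?_,?_,?_,?_,?_⟩,?_,?_,?_,?_,?_,?_,?_⟩
  · field_simp
    ring
  · field_simp
    linear_combination (-C01) * hD01
  · field_simp
    ring
  · field_simp
    ring
  · field_simp
    ring
  · field_simp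
    ring
  · field_simp
    linear_combination C01 * hD10
  · field_simp
    ring
  · field_simp
    linear_combination (-c10S * C01) * hD10
  · field_simp
    ring
  · field_simp
    ring
  · field_simp
    ring
  · field_simp
    ring
  · field_simp
    linear_combination (c10S * C01) * hD01
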